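/- Under the time-reversal invariance assumption, the two-times measurement statistics with initial state ω satisfies the pointwise detailed balance relation: for all t ∈ ℝ and all a, b ∈ 𝒜, p_{ω,t}(a,b) = (λ_b/λ_a)·p_{ω,t}(b,a), i.e. p_{ω,t}(a,b) = exp(−ℰ(b,a))·p_{ω,t}(b,a). -/

import Mathlib

open Matrix NormedSpace
open scoped ComplexOrder

noncomputable section

/-- The two-times measurement statistics
`p_{ν,t}(b,a) = trace(exp(−itH)·P_a·ν·P_a·exp(itH)·P_b)`. -/
def ttm {n 𝒜 : Type*} [Fintype n] [DecidableEq n]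
    (H : Matrix n n ℂ) (P : 𝒜 → Matrix n n ℂ) (ν : Matrix n n ℂ) (t : ℝ) (b a : 𝒜) : ℂ :=
  (NormedSpace.exp ((-(Complex.I * t)) • H) * P a * ν * P a * NormedSpace.exp ((Complex.I * t) • H) * P b).trace

/-- The complex power `ω^z = ∑_a λ_a^z · P_a` of `ω = ∑_a λ_a · P_a`. -/
def omegaPow {n 𝒜 : Type*} [Fintype 𝒜] (lam : 𝒜 → ℝ) (P : 𝒜 → Matrix n n ℂ) (z : ℂ) :
    Matrix n n ℂ :=
  ∑ a, ((lam a : ℂ) ^ z) • P a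

/-- The pinching `ν̄ = ∑_a P_a·ν·P_a`. -/
def pinch {n 𝒜 : Type*} [Fintype n] [Fintype 𝒜]
    (P : 𝒜 → Matrix n n ℂ) (ν : Matrix n n ℂ) : Matrix n n ℂ :=
  ∑ a, P a * ν * P a

lemma trace_map_conj {n : Type*} [Fintype n] (M : Matrix n n ℂ) :
    (M.map (starRingEnd ℂ)).trace = starRingEnd ℂ M.trace := by
  simp [Matrix.trace, Matrix.diag, map_sum]

lemma map_conj_eq {n : Type*} (M : Matrix n n ℂ) :
    M.map (starRingEnd ℂ) = (Mᴴ)ᵀ := by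
  ext i j; simp [Matrix.conjTranspose_apply]

lemma exp_map_conj {n : Type*} [Fintype n] [DecidableEq n] (A : Matrix n n ℂ) :
    NormedSpace.exp (A.map (starRingEnd ℂ)) = (NormedSpace.exp A).map (starRingEnd ℂ) := by
  rw [map_conj_eq, Matrix.exp_transpose, Matrix.exp_conjTranspose, map_conj_eq]

lemma map_conj_smul {n : Type*} (z : ℂ) (M : Matrix n n ℂ) :
    (z • M).map (starRingEnd ℂ) = (starRingEnd ℂ z) • M.map (starRingEnd ℂ) := by
  ext i j; simp

theorem pointwise_detailed_balance
    {n 𝒜 : Type*} [Fintype n] [DecidableEq n] [Nonempty n]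
    [Fintype 𝒜] [DecidableEq 𝒜] [Nonempty 𝒜]
    (H : Matrix n n ℂ) (hH : H.IsHermitian)
    (P : 𝒜 → Matrix n n ℂ)
    (hPherm : ∀ a, (P a).IsHermitian)
    (hPidem : ∀ a, P a * P a = P a)
    (hPne : ∀ a, P a ≠ 0)
    (hPorth : ∀ a b, a ≠ b → P a * P b = 0)
    (hPsum : ∑ a, P a = 1)
    (lam : 𝒜 → ℝ) (hlampos : ∀ a, 0 < lam a)
    (hlaminj : Function.Injective lam)
    (hlamsum : ∑ a, (lam a : ℂ) * (P a).trace = 1)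
    (hTR : ∃ U : Matrix n n ℂ, U * Uᴴ = 1 ∧ Uᴴ * U = 1 ∧
      U * U.map (starRingEnd ℂ) = 1 ∧
      U * H.map (starRingEnd ℂ) * Uᴴ = H ∧
      ∀ a, U * (P a).map (starRingEnd ℂ) * Uᴴ = P a)
    (t : ℝ) (a b : 𝒜) :
    ttm H P (∑ c, (lam c : ℂ) • P c) t a b =
      ((lam b / lam a : ℝ) : ℂ) * ttm H P (∑ c, (lam c : ℂ) • P c) t b a := by
  simp only [ttm]
  set Em := NormedSpace.exp ((-(Complex.I * t)) • H) with hEm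
  set Ep := NormedSpace.exp ((Complex.I * t) • H) with hEp
  -- pinching of ω
  have hPomega : ∀ c, P c * (∑ d, (lam d : ℂ) • P d) * P c = (lam c : ℂ) • P c := by
    intro c
    rw [Finset.mul_sum, Finset.sum_mul]
    rw [Finset.sum_eq_single c]
    · rw [mul_smul_comm, smul_mul_assoc, hPidem, hPidem]
    · intro d _ hd
      rw [mul_smul_comm, smul_mul_assoc, hPorth c d (Ne.symm hd), zero_mul, smul_zero]
    · intro h; exact absurd (Finset.mem_univ c) h
  -- adjoints of propagators
  have hEpH : Epᴴ = Em := by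
    rw [hEp, hEm, ← Matrix.exp_conjTranspose]
    congr 1
    rw [conjTranspose_smul, hH.eq]
    congr 1
    simp [Complex.ext_iff]
  have hEmH : Emᴴ = Ep := by
    rw [← hEpH, conjTranspose_conjTranspose]
  -- the kernel T
  set T : 𝒜 → 𝒜 → ℂ := fun x y => (Em * P x * Ep * P y).trace with hT
  -- reality of T
  have hreal : ∀ x y, starRingEnd ℂ (T x y) = T x y := by
    intro x y
    rw [hT]
    calc starRingEnd ℂ (Em * P x * Ep * P y).trace
        = ((Em * P x * Ep * P y)ᴴ).trace := (trace_conjTranspose _).symm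
      _ = (P y * (Em * P x * Ep)).trace := by
          rw [conjTranspose_mul, conjTranspose_mul, conjTranspose_mul,
            hEpH, hEmH, (hPherm x).eq, (hPherm y).eq]
          simp only [Matrix.mul_assoc]
      _ = (Em * P x * Ep * P y).trace := trace_mul_comm _ _
  -- time reversal: conj(T x y) = T y x
  obtain ⟨U, hU1, hU2, _hU3, hUH, hUP⟩ := hTR
  have hUunit : IsUnit U := ⟨⟨U, Uᴴ, hU1, hU2⟩, rfl⟩
  have hUinv : U⁻¹ = Uᴴ := Matrix.inv_eq_right_inv hU1
  have hUexp : ∀ z : ℂ, U * NormedSpace.exp (z • H.map (starRingEnd ℂ)) * Uᴴ = NormedSpace.exp (z • H) := by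
    intro z
    rw [← hUinv, ← Matrix.exp_conj U _ hUunit]
    congr 1
    rw [mul_smul_comm, smul_mul_assoc, hUinv, hUH]
  have hTR' : ∀ x y, starRingEnd ℂ (T x y) = T y x := by
    intro x y
    rw [hT]
    have hmap : (Em * P x * Ep * P y).map (starRingEnd ℂ) =
        NormedSpace.exp ((Complex.I * t) • H.map (starRingEnd ℂ)) * (P x).map (starRingEnd ℂ) *
        NormedSpace.exp ((-(Complex.I * t)) • H.map (starRingEnd ℂ)) * (P y).map (starRingEnd ℂ) := by
      rw [Matrix.map_mul (f := starRingEnd ℂ), Matrix.map_mul (f := starRingEnd ℂ),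
        Matrix.map_mul (f := starRingEnd ℂ), hEm, hEp, ← exp_map_conj, ← exp_map_conj,
        map_conj_smul, map_conj_smul]
      congr 3
      · congr 1; simp [Complex.ext_iff]
      · congr 2; simp [Complex.ext_iff]
    calc starRingEnd ℂ (Em * P x * Ep * P y).trace
        = ((Em * P x * Ep * P y).map (starRingEnd ℂ)).trace := (trace_map_conj _).symm
      _ = (U * ((Em * P x * Ep * P y).map (starRingEnd ℂ)) * Uᴴ).trace := by
          rw [trace_mul_cycle, hU2, Matrix.one_mul]
      _ = ((U * NormedSpace.exp ((Complex.I * t) • H.map (starRingEnd ℂ)) * Uᴴ) *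
           (U * (P x).map (starRingEnd ℂ) * Uᴴ) *
           (U * NormedSpace.exp ((-(Complex.I * t)) • H.map (starRingEnd ℂ)) * Uᴴ) *
           (U * (P y).map (starRingEnd ℂ) * Uᴴ)).trace := by
          rw [hmap]; congr 1
          have h1 : ∀ M : Matrix n n ℂ, Uᴴ * (U * M) = M := by
            intro M; rw [← Matrix.mul_assoc, hU2, Matrix.one_mul]
          simp only [Matrix.mul_assoc, h1]
      _ = (Ep * P x * Em * P y).trace := by rw [hUexp, hUexp, hUP, hUP, hEm, hEp]
      _ = ((Ep * P x) * (Em * P y)).trace := by simp only [Matrix.mul_assoc]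
      _ = ((Em * P y) * (Ep * P x)).trace := trace_mul_comm _ _
      _ = T y x := by simp only [hT, Matrix.mul_assoc]
  have hsymm : T a b = T b a := by rw [← hreal a b, hTR' a b]
  -- reduce goal
  have hred : ∀ x y, (Em * P x * (∑ c, (lam c : ℂ) • P c) * P x * Ep * P y).trace
      = (lam x : ℂ) * T x y := by
    intro x y
    have : Em * P x * (∑ c, (lam c : ℂ) • P c) * P x = (lam x : ℂ) • (Em * P x) := by
      rw [Matrix.mul_assoc, Matrix.mul_assoc, ← Matrix.mul_assoc (P x), hPomega,
        mul_smul_comm]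
    rw [this, smul_mul_assoc, smul_mul_assoc, trace_smul, hT, smul_eq_mul]
  rw [hred, hred, hsymm]
  have hla : (lam a : ℂ) ≠ 0 := Complex.ofReal_ne_zero.mpr (ne_of_gt (hlampos a))
  push_cast
  field_simp
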